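/- There exist absolute constants c > 0 and C > 0 such that the following holds. Let 1 ≤ k ≤ d and let W* ∈ ℝ^{d×k} have nonzero columns w₁,…,w_k and full column rank, with condition number κ := s_max(W*)/s_min(W*); write w̄_i := w_i/‖w_i‖₂. Let U ∈ ℝ^{d×k} have orthonormal columns spanning the column space of W*. Let V ∈ ℝ^{d×k} have orthonormal columns with ‖V Vᵀ − U Uᵀ‖ ≤ δ₂, where δ₂ ≤ c/(κ √k). Let s₁,…,s_k ∈ {−1,1} and û₁,…,û_k ∈ ℝ^k satisfy ‖s_i û_i − Vᵀ w̄_i‖ ≤ δ₃ with δ₃ ≤ c/(κ³ √k). Let r* ∈ ℝ^k and Q₂ := Σ_{i=1}^k r*_i (Vᵀ w̄_i)(Vᵀ w̄_i)ᵀ ≠ 0, and let Q̂₂ ∈ ℝ^{k×k} satisfy ‖Q̂₂ − Q₂‖_F ≤ δ₄ ‖Q₂‖_F with δ₄ ≤ 1/4. Then the least-squares problem min_{r ∈ ℝ^k} ‖Σ_{i=1}^k r_i û_i û_iᵀ − Q̂₂‖_F has a unique minimizer r̂, and for every i ∈ [k]: |r̂_i − r*_i| ≤ C (k³ κ⁸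 δ₃ + κ² k² δ₄) ‖r*‖₂. -/

import Mathlib

open Matrix

/-- Euclidean norm of a finite real vector. -/
noncomputable def l2norm {ι : Type*} [Fintype ι] (x : ι → ℝ) : ℝ :=
  Real.sqrt (∑ i, x i ^ 2)

/-- Spectral (ℓ₂ operator) norm of a real matrix. -/
noncomputable def specNorm {m n : Type*} [Fintype m] [Fintype n] [DecidableEq n]
    (M : Matrix m n ℝ) : ℝ :=
  ‖LinearMap.toContinuousLinearMap (Matrix.toEuclideanLin M)‖

/-- Frobenius norm of a real matrix. -/
noncomputable def frobNorm {m n : Type*} [Fintype m] [Fintype n]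
    (M : Matrix m n ℝ) : ℝ :=
  Real.sqrt (∑ a, ∑ b, M a b ^ 2)

/-- Smallest singular value of a tall matrix (minimum of `‖Wx‖` over unit vectors `x`). -/
noncomputable def sminCol {d k : ℕ} (W : Matrix (Fin d) (Fin k) ℝ) : ℝ :=
  sInf {y | ∃ x : Fin k → ℝ, l2norm x = 1 ∧ y = l2norm (W.mulVec x)}

set_option linter.unusedVariables false
set_option maxHeartbeats 1000000

noncomputable def toE {n : Type*} [Fintype n] (x : n → ℝ) : EuclideanSpace ℝ n :=
  (WithLp.equiv 2 _).symm x

lemma l2norm_eq {n : Type*} [Fintype n] (x : n → ℝ) : l2norm x = ‖toE x‖ := by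
  rw [EuclideanSpace.norm_eq]
  unfold l2norm
  congr 1
  refine Finset.sum_congr rfl fun i _ => ?_
  rw [Real.norm_eq_abs, sq_abs]; rfl

lemma l2norm_nonneg {n : Type*} [Fintype n] (x : n → ℝ) : 0 ≤ l2norm x :=
  Real.sqrt_nonneg _

lemma l2norm_sq {n : Type*} [Fintype n] (x : n → ℝ) : (l2norm x)^2 = ∑ i, x i ^ 2 :=
  Real.sq_sqrt (Finset.sum_nonneg fun i _ => sq_nonneg _)

lemma l2norm_eq_zero {n : Type*} [Fintype n] {x : n → ℝ} (h : l2norm x = 0) : x = 0 := by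
  rw [l2norm_eq, norm_eq_zero] at h
  funext i
  exact congrArg (fun v : EuclideanSpace ℝ n => WithLp.ofLp v i) h

lemma l2norm_pos {n : Type*} [Fintype n] {x : n → ℝ} (h : x ≠ 0) : 0 < l2norm x := by
  rcases lt_or_eq_of_le (l2norm_nonneg x) with h' | h'
  · exact h'
  · exact absurd (l2norm_eq_zero h'.symm) h

lemma l2norm_smul {n : Type*} [Fintype n] (c : ℝ) (x : n → ℝ) :
    l2norm (c • x) = |c| * l2norm x := by
  rw [l2norm_eq, l2norm_eq]
  have h : toE (c • x) = c • toE x := rfl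
  rw [h, norm_smul, Real.norm_eq_abs]

lemma coord_le_l2norm {n : Type*} [Fintype n] (x : n → ℝ) (i : n) : |x i| ≤ l2norm x := by
  rw [← Real.sqrt_sq_eq_abs]
  unfold l2norm
  exact Real.sqrt_le_sqrt (Finset.single_le_sum (fun j _ => sq_nonneg (x j)) (Finset.mem_univ i))

lemma dot_eq_inner {n : Type*} [Fintype n] (x y : n → ℝ) :
    (x ⬝ᵥ y) = inner ℝ (toE x) (toE y) := by
  rw [PiLp.inner_apply]
  simp only [dotProduct, RCLike.inner_apply, conj_trivial]
  exact Finset.sum_congr rfl fun i _ => mul_comm _ _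

lemma l2norm_sq_dot {n : Type*} [Fintype n] (x : n → ℝ) : (l2norm x)^2 = x ⬝ᵥ x := by
  rw [l2norm_sq, dotProduct]
  exact Finset.sum_congr rfl fun i _ => (sq (x i)).symm ▸ by ring

lemma mulVec_le_specNorm {m n : Type*} [Fintype m] [Fintype n] [DecidableEq n]
    (M : Matrix m n ℝ) (x : n → ℝ) :
    l2norm (M.mulVec x) ≤ specNorm M * l2norm x := by
  rw [l2norm_eq, l2norm_eq]
  have h : toE (M.mulVec x) = (LinearMap.toContinuousLinearMap (Matrix.toEuclideanLin M)) (toE x) := rfl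
  rw [h]
  exact ContinuousLinearMap.le_opNorm _ _

lemma specNorm_nonneg {m n : Type*} [Fintype m] [Fintype n] [DecidableEq n]
    (M : Matrix m n ℝ) : 0 ≤ specNorm M := norm_nonneg _

lemma quadform_le_specNorm {n : Type*} [Fintype n] [DecidableEq n]
    (B : Matrix n n ℝ) (x : n → ℝ) :
    |x ⬝ᵥ B.mulVec x| ≤ specNorm B * (l2norm x)^2 := by
  rw [dot_eq_inner, l2norm_eq]
  calc |inner ℝ (toE x) (toE (B.mulVec x))| ≤ ‖toE x‖ * ‖toE (B.mulVec x)‖ :=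
        abs_real_inner_le_norm _ _
    _ ≤ ‖toE x‖ * (specNorm B * ‖toE x‖) := by
        refine mul_le_mul_of_nonneg_left ?_ (norm_nonneg _)
        rw [← l2norm_eq, ← l2norm_eq]; exact mulVec_le_specNorm B x
    _ = specNorm B * ‖toE x‖^2 := by ring

lemma transpose_dot {d k : ℕ} (A : Matrix (Fin d) (Fin k) ℝ) (y : Fin d → ℝ) :
    (Aᵀ.mulVec y) ⬝ᵥ (Aᵀ.mulVec y) = y ⬝ᵥ ((A * Aᵀ).mulVec y) := by
  rw [Matrix.dotProduct_mulVec, Matrix.mulVec_transpose, Matrix.vecMul_vecMul,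
    ← Matrix.dotProduct_mulVec]

noncomputable def vecL (k : ℕ) : Matrix (Fin k) (Fin k) ℝ →ₗ[ℝ] EuclideanSpace ℝ (Fin k × Fin k) where
  toFun M := toE (fun p => M p.1 p.2)
  map_add' M N := rfl
  map_smul' c M := rfl

lemma frob_eq {k : ℕ} (M : Matrix (Fin k) (Fin k) ℝ) : frobNorm M = ‖vecL k M‖ := by
  rw [EuclideanSpace.norm_eq]
  unfold frobNorm
  rw [Fintype.sum_prod_type]
  congr 1
  refine Finset.sum_congr rfl fun a _ => Finset.sum_congr rfl fun b _ => ?_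
  rw [Real.norm_eq_abs, sq_abs]; rfl

lemma frob_nonneg {k : ℕ} (M : Matrix (Fin k) (Fin k) ℝ) : 0 ≤ frobNorm M :=
  Real.sqrt_nonneg _

lemma frob_pos {k : ℕ} {M : Matrix (Fin k) (Fin k) ℝ} (h : M ≠ 0) : 0 < frobNorm M := by
  rw [frob_eq]
  rcases (norm_nonneg (vecL k M)).lt_or_eq with h' | h'
  · exact h'
  · exfalso; apply h
    have h0 := norm_eq_zero.mp h'.symm
    ext a b
    show M a b = 0
    exact congrArg (fun v : EuclideanSpace ℝ (Fin k × Fin k) => WithLp.ofLp v (a, b)) h0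

lemma frob_transpose {k : ℕ} (M : Matrix (Fin k) (Fin k) ℝ) : frobNorm Mᵀ = frobNorm M := by
  unfold frobNorm
  rw [Finset.sum_comm]
  rfl

lemma frob_vecMulVec {k : ℕ} (x y : Fin k → ℝ) :
    frobNorm (vecMulVec x y) = l2norm x * l2norm y := by
  unfold frobNorm l2norm
  rw [← Real.sqrt_mul (Finset.sum_nonneg fun i _ => sq_nonneg _)]
  congr 1
  rw [Finset.sum_mul_sum]
  refine Finset.sum_congr rfl fun a _ => Finset.sum_congr rfl fun b _ => ?_
  rw [Matrix.vecMulVec_apply]; ring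

lemma frob_diagonal {k : ℕ} (r : Fin k → ℝ) : frobNorm (diagonal r) = l2norm r := by
  unfold frobNorm l2norm
  congr 1
  refine Finset.sum_congr rfl fun a _ => ?_
  rw [Finset.sum_eq_single a]
  · rw [Matrix.diagonal_apply_eq]
  · intro b _ hb
    rw [Matrix.diagonal_apply_ne' _ hb]
    exact zero_pow two_ne_zero
  · intro h; exact absurd (Finset.mem_univ a) h

lemma le_of_sq_le_sq' {a b : ℝ} (hb : 0 ≤ b) (h : a^2 ≤ b^2) (ha : 0 ≤ a) : a ≤ b := by
  nlinarith

lemma frob_sq {k : ℕ} (M : Matrix (Fin k) (Fin k) ℝ) :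
    (frobNorm M)^2 = ∑ a, ∑ b, M a b ^ 2 :=
  Real.sq_sqrt (Finset.sum_nonneg fun a _ => Finset.sum_nonneg fun b _ => sq_nonneg _)

lemma frob_mul_left {k : ℕ} (A M : Matrix (Fin k) (Fin k) ℝ) {σ : ℝ} (hσ : 0 ≤ σ)
    (h : ∀ x, σ * l2norm x ≤ l2norm (A.mulVec x)) :
    σ * frobNorm M ≤ frobNorm (A * M) := by
  refine le_of_sq_le_sq' (frob_nonneg _) ?_ (mul_nonneg hσ (frob_nonneg _))
  rw [mul_pow, frob_sq, frob_sq]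
  have e1 : (∑ a, ∑ b, M a b ^ 2) = ∑ b, ∑ a, M a b ^ 2 := Finset.sum_comm
  have e2 : (∑ a, ∑ b, (A * M) a b ^ 2) = ∑ b, ∑ a, (A * M) a b ^ 2 := Finset.sum_comm
  rw [e1, e2, Finset.mul_sum]
  refine Finset.sum_le_sum fun b _ => ?_
  have h1 : σ ^ 2 * ∑ a, M a b ^ 2 = (σ * l2norm (fun a => M a b))^2 := by
    rw [mul_pow, l2norm_sq]
  have h2 : ∑ a, (A * M) a b ^ 2 = (l2norm (A.mulVec (fun a => M a b)))^2 := by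
    rw [l2norm_sq]
    refine Finset.sum_congr rfl fun a _ => ?_
    simp [Matrix.mul_apply, Matrix.mulVec, dotProduct]
  rw [h1, h2]
  exact pow_le_pow_left₀ (mul_nonneg hσ (l2norm_nonneg _)) (h _) 2

lemma frob_mul_right {k : ℕ} (A M : Matrix (Fin k) (Fin k) ℝ) {σ : ℝ} (hσ : 0 ≤ σ)
    (h : ∀ x, σ * l2norm x ≤ l2norm (A.mulVec x)) :
    σ * frobNorm M ≤ frobNorm (M * Aᵀ) := by
  have h' := frob_mul_left A Mᵀ hσ h
  rw [frob_transpose] at h'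
  calc σ * frobNorm M ≤ frobNorm (A * Mᵀ) := h'
    _ = frobNorm ((A * Mᵀ)ᵀ) := (frob_transpose _).symm
    _ = frobNorm (M * Aᵀ) := by rw [Matrix.transpose_mul, Matrix.transpose_transpose]

lemma sum_rank_one_eq {k : ℕ} (A : Matrix (Fin k) (Fin k) ℝ) (r : Fin k → ℝ) :
    (∑ i, r i • vecMulVec (fun a => A a i) (fun a => A a i)) = A * diagonal r * Aᵀ := by
  ext a b
  rw [Matrix.sum_apply]
  rw [Matrix.mul_apply]
  simp only [Matrix.smul_apply, Matrix.vecMulVec_apply, smul_eq_mul,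
    Matrix.mul_diagonal, Matrix.transpose_apply]
  refine Finset.sum_congr rfl fun i _ => by ring

lemma abs_sum_le_sqrt_card {k : ℕ} (r : Fin k → ℝ) :
    ∑ i, |r i| ≤ Real.sqrt k * l2norm r := by
  have h := sq_sum_le_card_mul_sum_sq (s := Finset.univ) (f := fun i => |r i|)
  simp only [Finset.card_univ, Fintype.card_fin, sq_abs] at h
  have h2 : ∑ i, |r i| = Real.sqrt ((∑ i, |r i|)^2) :=
    (Real.sqrt_sq (Finset.sum_nonneg fun i _ => abs_nonneg _)).symm
  rw [h2]
  calc Real.sqrt ((∑ i, |r i|)^2) ≤ Real.sqrt (k * ∑ i, r i ^2) := by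
        apply Real.sqrt_le_sqrt; exact_mod_cast h
    _ = Real.sqrt k * l2norm r := by
        rw [Real.sqrt_mul (Nat.cast_nonneg k)]; rfl

lemma least_squares {E : Type*} [NormedAddCommGroup E] [InnerProductSpace ℝ E]
    [FiniteDimensional ℝ E] {k : ℕ} (T : (Fin k → ℝ) →ₗ[ℝ] E)
    (hinj : Function.Injective T) (b : E) :
    ∃ rhat : Fin k → ℝ, (∀ r, ‖T rhat - b‖ ≤ ‖T r - b‖) ∧
      ∀ r', (∀ r, ‖T r' - b‖ ≤ ‖T r - b‖) → r' = rhat := by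
  set K := LinearMap.range T with hK
  have hp : (K.starProjection b : E) ∈ K := K.starProjection_apply_mem b
  obtain ⟨rhat, hrhat⟩ := hp
  have key : ∀ r : Fin k → ℝ, ‖T r - b‖^2
      = ‖T r - T rhat‖^2 + ‖T rhat - b‖^2 := by
    intro r
    have horth : b - (K.starProjection b : E) ∈ Kᗮ :=
      K.sub_starProjection_mem_orthogonal b
    have hmem : T r - T rhat ∈ K := K.sub_mem (LinearMap.mem_range_self T r) (LinearMap.mem_range_self T rhat)
    have hinner : inner ℝ (T r - T rhat) (T rhat - b) = (0:ℝ) := by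
      have h0 := (Submodule.mem_orthogonal K _).mp horth _ hmem
      rw [hrhat] at h0 ⊢
      rw [← neg_sub b (K.starProjection b : E), inner_neg_right, h0, neg_zero]
    have hsum : T r - b = (T r - T rhat) + (T rhat - b) := by abel
    rw [hsum, norm_add_sq_real, hinner]
    ring
  refine ⟨rhat, fun r => ?_, fun r' hr' => ?_⟩
  · have hk2 := key r
    have h2 : ‖T rhat - b‖^2 ≤ ‖T r - b‖^2 := by nlinarith [sq_nonneg ‖T r - T rhat‖]
    nlinarith [norm_nonneg (T rhat - b), norm_nonneg (T r - b)]
  · have h1 := hr' rhat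
    have h2 := key r'
    have h3 : ‖T r' - T rhat‖^2 ≤ 0 := by nlinarith [norm_nonneg (T r' - b), norm_nonneg (T rhat - b)]
    have h4 : T r' - T rhat = 0 := by
      have hn : ‖T r' - T rhat‖ = 0 := by nlinarith [norm_nonneg (T r' - T rhat)]
      exact norm_eq_zero.mp hn
    exact hinj (sub_eq_zero.mp h4)

lemma smin_bddBelow {d k : ℕ} (W : Matrix (Fin d) (Fin k) ℝ) :
    BddBelow {y | ∃ x : Fin k → ℝ, l2norm x = 1 ∧ y = l2norm (W.mulVec x)} :=
  ⟨0, fun y ⟨x, _, hy⟩ => hy ▸ l2norm_nonneg _⟩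

lemma smin_le {d k : ℕ} (W : Matrix (Fin d) (Fin k) ℝ) (x : Fin k → ℝ) :
    sminCol W * l2norm x ≤ l2norm (W.mulVec x) := by
  rcases eq_or_ne x 0 with rfl | hx
  · rw [show l2norm (0 : Fin k → ℝ) = 0 by unfold l2norm; simp, mul_zero]
    exact l2norm_nonneg _
  · have hpos := l2norm_pos hx
    set u : Fin k → ℝ := (l2norm x)⁻¹ • x with hu
    have hu1 : l2norm u = 1 := by
      rw [hu, l2norm_smul, abs_of_nonneg (by positivity), inv_mul_cancel₀ (ne_of_gt hpos)]
    have hmem : l2norm (W.mulVec u) ∈ {y | ∃ x : Fin k → ℝ, l2norm x = 1 ∧ y = l2norm (W.mulVec x)} :=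
      ⟨u, hu1, rfl⟩
    have h1 : sminCol W ≤ l2norm (W.mulVec u) := csInf_le (smin_bddBelow W) hmem
    have h2 : W.mulVec u = (l2norm x)⁻¹ • W.mulVec x := by
      rw [hu, Matrix.mulVec_smul]
    rw [h2, l2norm_smul, abs_of_nonneg (by positivity)] at h1
    calc sminCol W * l2norm x ≤ ((l2norm x)⁻¹ * l2norm (W.mulVec x)) * l2norm x :=
          mul_le_mul_of_nonneg_right h1 (l2norm_nonneg x)
      _ = l2norm (W.mulVec x) := by field_simp

lemma smin_nonneg {d k : ℕ} (W : Matrix (Fin d) (Fin k) ℝ) : 0 ≤ sminCol W :=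
  Real.sInf_nonneg (fun y ⟨x, _, hy⟩ => hy ▸ l2norm_nonneg _)

lemma l2norm_single {n : Type*} [Fintype n] [DecidableEq n] (i : n) :
    l2norm (Pi.single i (1:ℝ)) = 1 := by
  rw [l2norm_eq]
  have h : toE (Pi.single i (1:ℝ)) = EuclideanSpace.single i 1 := rfl
  rw [h, EuclideanSpace.norm_single, norm_one]

lemma smin_pos {d k : ℕ} (W : Matrix (Fin d) (Fin k) ℝ) (hk : 1 ≤ k)
    (hrank : W.rank = k) : 0 < sminCol W := by
  have hfin : Module.finrank ℝ (Fin k → ℝ) = k := by simp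
  have hrange : Module.finrank ℝ (LinearMap.range W.mulVecLin) = k := hrank
  have hker : Module.finrank ℝ (LinearMap.ker W.mulVecLin) = 0 := by
    have h := LinearMap.finrank_range_add_finrank_ker W.mulVecLin
    rw [hfin, hrange] at h
    omega
  have hkerbot : LinearMap.ker W.mulVecLin = ⊥ := Submodule.finrank_eq_zero.mp hker
  have hinj : Function.Injective W.mulVecLin := LinearMap.ker_eq_bot.mp hkerbot
  set g := LinearMap.toContinuousLinearMap (Matrix.toEuclideanLin W) with hg
  have hcont : Continuous (fun x : EuclideanSpace ℝ (Fin k) => ‖g x‖) :=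
    g.continuous.norm
  have hS : IsCompact (Metric.sphere (0 : EuclideanSpace ℝ (Fin k)) 1) :=
    isCompact_sphere _ _
  have hne : (Metric.sphere (0 : EuclideanSpace ℝ (Fin k)) 1).Nonempty := by
    refine ⟨EuclideanSpace.single ⟨0, hk⟩ 1, ?_⟩
    rw [mem_sphere_zero_iff_norm, EuclideanSpace.norm_single, norm_one]
  obtain ⟨x₀, hx₀S, hx₀min⟩ := hS.exists_isMinOn hne hcont.continuousOn
  set m := ‖g x₀‖ with hm
  have hmpos : 0 < m := by
    rcases (norm_nonneg (g x₀)).lt_or_eq with h | h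
    · exact h
    · exfalso
      have hgx : g x₀ = 0 := norm_eq_zero.mp h.symm
      have h1 : W.mulVecLin ((WithLp.equiv 2 _) x₀) = 0 := by
        have h2 : Matrix.toEuclideanLin W x₀ = 0 := hgx
        exact congrArg (WithLp.equiv 2 _) h2
      have hx0 : (WithLp.equiv 2 _) x₀ = 0 := by
        apply hinj; rw [h1]; simp
      have h3 : x₀ = 0 := by
        apply (WithLp.equiv 2 _).injective
        exact hx0
      rw [h3] at hx₀S
      simp at hx₀S
  refine lt_of_lt_of_le hmpos (le_csInf ?_ ?_)
  · refine ⟨l2norm (W.mulVec (Pi.single ⟨0, hk⟩ 1)), Pi.single ⟨0, hk⟩ 1, l2norm_single _, rfl⟩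
  · rintro y ⟨x, hx1, rfl⟩
    have hxs : toE x ∈ Metric.sphere (0 : EuclideanSpace ℝ (Fin k)) 1 := by
      rw [mem_sphere_zero_iff_norm, ← l2norm_eq, hx1]
    have hmin := hx₀min hxs
    have heq : ‖g (toE x)‖ = l2norm (W.mulVec x) := by
      rw [l2norm_eq]; rfl
    rw [← heq]
    exact hmin

lemma col_le_specNorm {m n : Type*} [Fintype m] [Fintype n] [DecidableEq n]
    (M : Matrix m n ℝ) (i : n) :
    l2norm (fun a => M a i) ≤ specNorm M := by
  have h2 := mulVec_le_specNorm M (Pi.single i 1)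
  rw [l2norm_single, mul_one, Matrix.mulVec_single] at h2
  have h3 : l2norm (M.col i) ≤ specNorm M := by simpa using h2
  exact h3

lemma l2norm_add_le {n : Type*} [Fintype n] (x y : n → ℝ) :
    l2norm (x + y) ≤ l2norm x + l2norm y := by
  rw [l2norm_eq, l2norm_eq, l2norm_eq]
  exact norm_add_le (toE x) (toE y)

lemma frob_sub_eq {k : ℕ} (X Y : Matrix (Fin k) (Fin k) ℝ) :
    frobNorm (X - Y) = ‖vecL k X - vecL k Y‖ := by
  rw [frob_eq, map_sub]

lemma frob_sub_comm {k : ℕ} (X Y : Matrix (Fin k) (Fin k) ℝ) :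
    frobNorm (X - Y) = frobNorm (Y - X) := by
  rw [frob_sub_eq, frob_sub_eq, norm_sub_rev]

lemma frob_sum_smul_le {k : ℕ} (r : Fin k → ℝ) (D : Fin k → Matrix (Fin k) (Fin k) ℝ) :
    frobNorm (∑ i, r i • D i) ≤ ∑ i, |r i| * frobNorm (D i) := by
  rw [frob_eq, map_sum]
  refine le_trans (norm_sum_le _ _) (Finset.sum_le_sum fun i _ => ?_)
  rw [LinearMap.map_smul, norm_smul, Real.norm_eq_abs, frob_eq]
lemma frob_add_le {k : ℕ} (X Y : Matrix (Fin k) (Fin k) ℝ) :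
    frobNorm (X + Y) ≤ frobNorm X + frobNorm Y := by
  rw [frob_eq, map_add]
  exact (norm_add_le _ _).trans (by rw [← frob_eq, ← frob_eq])

/-- Lemma A.13, `solution_system_2`, of the paper. Robust recovery of
the coefficients `r*` from the approximate quadratic-form linear system
`min_r ‖∑ i, r_i û_i û_iᵀ − Q̂₂‖_F`: the least-squares problem has a unique minimizer `r̂`,
and `|r̂_i − r*_i| ≤ C (k³ κ⁸ δ₃ + κ² k² δ₄) ‖r*‖₂`. -/
theorem linear_system_recovery_quadratic_form :
    ∃ c C : ℝ, 0 < c ∧ 0 < C ∧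
    ∀ (d k : ℕ), 1 ≤ k → k ≤ d →
    ∀ W : Matrix (Fin d) (Fin k) ℝ,
      (∀ i, (fun a => W a i) ≠ 0) → W.rank = k →
    ∀ κ : ℝ, κ = specNorm W / sminCol W →
    ∀ wbar : Fin k → Fin d → ℝ,
      (∀ i, wbar i = fun a => W a i / l2norm fun a' => W a' i) →
    ∀ U : Matrix (Fin d) (Fin k) ℝ, Uᵀ * U = 1 →
      LinearMap.range U.mulVecLin = LinearMap.range W.mulVecLin →
    ∀ V : Matrix (Fin d) (Fin k) ℝ, Vᵀ * V = 1 →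
    ∀ δ₂ δ₃ δ₄ : ℝ,
      specNorm (V * Vᵀ - U * Uᵀ) ≤ δ₂ → δ₂ ≤ c / (κ * Real.sqrt k) →
    ∀ s : Fin k → ℝ, (∀ i, s i = 1 ∨ s i = -1) →
    ∀ uhat : Fin k → Fin k → ℝ,
      (∀ i, l2norm (fun a => s i * uhat i a - Vᵀ.mulVec (wbar i) a) ≤ δ₃) →
      δ₃ ≤ c / (κ ^ 3 * Real.sqrt k) →
    ∀ rstar : Fin k → ℝ,
    ∀ Q₂ : Matrix (Fin k) (Fin k) ℝ,
      Q₂ = (∑ i, rstar i • vecMulVec (Vᵀ.mulVec (wbar i)) (Vᵀ.mulVec (wbar i))) →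
      Q₂ ≠ 0 →
    ∀ Q₂hat : Matrix (Fin k) (Fin k) ℝ,
      frobNorm (Q₂hat - Q₂) ≤ δ₄ * frobNorm Q₂ → δ₄ ≤ 1 / 4 →
    ∃ rhat : Fin k → ℝ,
      (∀ r : Fin k → ℝ,
        frobNorm ((∑ i, rhat i • vecMulVec (uhat i) (uhat i)) - Q₂hat) ≤
          frobNorm ((∑ i, r i • vecMulVec (uhat i) (uhat i)) - Q₂hat)) ∧
      (∀ r' : Fin k → ℝ,
        (∀ r : Fin k → ℝ,
          frobNorm ((∑ i, r' i • vecMulVec (uhat i) (uhat i)) - Q₂hat) ≤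
            frobNorm ((∑ i, r i • vecMulVec (uhat i) (uhat i)) - Q₂hat)) →
        r' = rhat) ∧
      ∀ i, |rhat i - rstar i| ≤
        C * ((k : ℝ) ^ 3 * κ ^ 8 * δ₃ + κ ^ 2 * (k : ℝ) ^ 2 * δ₄) * l2norm rstar := by
  refine ⟨1/100, 16, by norm_num, by norm_num, ?_⟩
  intro d k hk hkd W hWcols hWrank κ hκdef wbar hwbarh U hUorth hUrange V hVorth
    δ₂ δ₃ δ₄ hδ₂ hδ₂c s hs uhat huhat hδ₃c rstar Q₂ hQ₂ hQ₂ne Q₂hat hQ₂hat hδ₄c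
  have i0 : Fin k := ⟨0, hk⟩
  have hk1 : (1:ℝ) ≤ (k:ℝ) := by exact_mod_cast hk
  have hk0 : (0:ℝ) < (k:ℝ) := lt_of_lt_of_le one_pos hk1
  have hsk1 : (1:ℝ) ≤ Real.sqrt k := by
    rw [show (1:ℝ) = Real.sqrt 1 from Real.sqrt_one.symm]
    exact Real.sqrt_le_sqrt hk1
  have hsk0 : (0:ℝ) < Real.sqrt k := lt_of_lt_of_le one_pos hsk1
  have hsmin : 0 < sminCol W := smin_pos W hk hWrank
  have hspec_pos : 0 < specNorm W :=
    lt_of_lt_of_le (l2norm_pos (hWcols i0)) (col_le_specNorm W i0)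
  have hκ0 : 0 < κ := by rw [hκdef]; exact div_pos hspec_pos hsmin
  have hsmin_le_spec : sminCol W ≤ specNorm W := by
    have h1 := smin_le W (Pi.single i0 1)
    rw [l2norm_single, mul_one] at h1
    have h2 := mulVec_le_specNorm W (Pi.single i0 1)
    rw [l2norm_single, mul_one] at h2
    exact h1.trans h2
  have hκ1 : 1 ≤ κ := by rw [hκdef, one_le_div hsmin]; exact hsmin_le_spec
  have hκ3 : 1 ≤ κ^3 := one_le_pow₀ hκ1
  have hδ₂0 : 0 ≤ δ₂ := (specNorm_nonneg _).trans hδ₂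
  have hδ₂s : δ₂ ≤ 1/100 := by
    refine hδ₂c.trans ?_
    refine div_le_self (by norm_num) ?_
    nlinarith
  have hδ₃0 : 0 ≤ δ₃ := (l2norm_nonneg _).trans (huhat i0)
  have hδ₃s : δ₃ ≤ 1/100 := by
    refine hδ₃c.trans ?_
    refine div_le_self (by norm_num) ?_
    nlinarith
  have hfQ₂ : 0 < frobNorm Q₂ := frob_pos hQ₂ne
  have hδ₄0 : 0 ≤ δ₄ := by nlinarith [frob_nonneg (Q₂hat - Q₂)]
  -- wbar facts
  have hwbar_smul : ∀ i, wbar i = (l2norm (fun a => W a i))⁻¹ • (fun a => W a i) := by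
    intro i
    rw [hwbarh i]; funext a; simp [div_eq_inv_mul]
  have hwbar_norm : ∀ i, l2norm (wbar i) = 1 := by
    intro i
    have hni : 0 < l2norm (fun a => W a i) := l2norm_pos (hWcols i)
    rw [hwbar_smul i, l2norm_smul, abs_of_nonneg (by positivity),
      inv_mul_cancel₀ (ne_of_gt hni)]
  have hwbar_mem : ∀ i, wbar i ∈ LinearMap.range U.mulVecLin := by
    intro i
    rw [hUrange]
    have hcol : (fun a => W a i) = W.mulVec (Pi.single i 1) := by
      rw [Matrix.mulVec_single]; funext a; simp
    rw [hwbar_smul i, hcol]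
    exact Submodule.smul_mem _ _ ⟨Pi.single i 1, rfl⟩
  -- isometry facts for U
  have hUiso : ∀ z : Fin k → ℝ, (l2norm (U.mulVec z))^2 = (l2norm z)^2 := by
    intro z
    rw [l2norm_sq_dot, l2norm_sq_dot, Matrix.dotProduct_mulVec, ← Matrix.mulVec_transpose,
      Matrix.mulVec_mulVec, hUorth, Matrix.one_mulVec]
  have hUT : ∀ y : Fin d → ℝ, y ∈ LinearMap.range U.mulVecLin →
      y ⬝ᵥ ((U * Uᵀ).mulVec y) = (l2norm y)^2 := by
    intro y hy
    obtain ⟨z, hz⟩ := hy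
    have h1 : y ⬝ᵥ ((U * Uᵀ).mulVec y) = (l2norm (Uᵀ.mulVec y))^2 := by
      rw [l2norm_sq_dot, transpose_dot]
    rw [h1, ← hz]
    show (l2norm (Uᵀ.mulVec (U.mulVec z)))^2 = (l2norm (U.mulVec z))^2
    rw [Matrix.mulVec_mulVec, hUorth, Matrix.one_mulVec, hUiso]
  have hVquad : ∀ y : Fin d → ℝ, y ∈ LinearMap.range U.mulVecLin →
      |(l2norm (Vᵀ.mulVec y))^2 - (l2norm y)^2| ≤ δ₂ * (l2norm y)^2 := by
    intro y hy
    have e1 : (l2norm (Vᵀ.mulVec y))^2 = y ⬝ᵥ ((V * Vᵀ).mulVec y) := by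
      rw [l2norm_sq_dot, transpose_dot]
    have e2 := hUT y hy
    have e3 : y ⬝ᵥ ((V * Vᵀ).mulVec y) - y ⬝ᵥ ((U * Uᵀ).mulVec y)
        = y ⬝ᵥ ((V * Vᵀ - U * Uᵀ).mulVec y) := by
      rw [Matrix.sub_mulVec, dotProduct_sub]
    have e4 : |(l2norm (Vᵀ.mulVec y))^2 - (l2norm y)^2|
        = |y ⬝ᵥ ((V * Vᵀ - U * Uᵀ).mulVec y)| := by rw [e1, ← e2, e3]
    rw [e4]
    exact (quadform_le_specNorm _ _).trans (mul_le_mul_of_nonneg_right hδ₂ (sq_nonneg _))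
  -- the v vectors
  set v : Fin k → Fin k → ℝ := fun i => Vᵀ.mulVec (wbar i) with hvdef
  have hv_ub : ∀ i, l2norm (v i) ≤ 3/2 := by
    intro i
    have h := hVquad (wbar i) (hwbar_mem i)
    rw [hwbar_norm i, one_pow, mul_one] at h
    have h' := abs_le.mp h
    refine le_of_sq_le_sq' (by norm_num) ?_ (l2norm_nonneg _)
    have : (l2norm (v i))^2 = (l2norm (Vᵀ.mulVec (wbar i)))^2 := rfl
    rw [this]
    nlinarith [h'.2]
  -- the normalized-column matrix and A = Vᵀ * Wb
  set Wb : Matrix (Fin d) (Fin k) ℝ := Matrix.of (fun a i => wbar i a) with hWbdef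
  set A : Matrix (Fin k) (Fin k) ℝ := Vᵀ * Wb with hAdef
  have hAcol : ∀ i, (fun a => A a i) = v i := by
    intro i; funext a
    show (Vᵀ * Wb) a i = Vᵀ.mulVec (wbar i) a
    rw [Matrix.mul_apply, Matrix.mulVec, dotProduct]
    rfl
  have hAlow : ∀ x : Fin k → ℝ, (9/10) * κ⁻¹ * l2norm x ≤ l2norm (A.mulVec x) := by
    intro x
    set y : Fin d → ℝ := Wb.mulVec x with hydef
    have hymem : y ∈ LinearMap.range U.mulVecLin := by
      have hyeq : y = ∑ i, x i • wbar i := by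
        funext a
        show Wb.mulVec x a = _
        rw [Matrix.mulVec, dotProduct, Finset.sum_apply]
        refine Finset.sum_congr rfl fun i _ => ?_
        show Wb a i * x i = x i • wbar i a
        simp [hWbdef, mul_comm]
      rw [hyeq]
      exact Submodule.sum_mem _ fun i _ => Submodule.smul_mem _ _ (hwbar_mem i)
    have hylb : κ⁻¹ * l2norm x ≤ l2norm y := by
      set z : Fin k → ℝ := fun i => x i / l2norm (fun a => W a i) with hzdef
      have hyz : y = W.mulVec z := by
        funext a
        show Wb.mulVec x a = W.mulVec z a
        rw [Matrix.mulVec, Matrix.mulVec, dotProduct, dotProduct]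
        refine Finset.sum_congr rfl fun i _ => ?_
        show Wb a i * x i = W a i * z i
        have h1 : Wb a i = wbar i a := rfl
        rw [h1, hwbarh i, hzdef]
        show W a i / l2norm (fun a' => W a' i) * x i = W a i * (x i / l2norm (fun a => W a i))
        ring
      have hzlb : (specNorm W)⁻¹ * l2norm x ≤ l2norm z := by
        refine le_of_sq_le_sq' (l2norm_nonneg _) ?_
          (mul_nonneg (inv_nonneg.mpr hspec_pos.le) (l2norm_nonneg x))
        rw [mul_pow, l2norm_sq, l2norm_sq, Finset.mul_sum]
        refine Finset.sum_le_sum fun i _ => ?_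
        have hni : 0 < l2norm (fun a => W a i) := l2norm_pos (hWcols i)
        have hns : l2norm (fun a => W a i) ≤ specNorm W := col_le_specNorm W i
        show (specNorm W)⁻¹^2 * x i ^2 ≤ (x i / l2norm (fun a => W a i))^2
        rw [div_pow]
        have h1 : (specNorm W)⁻¹^2 * x i^2 = x i^2 / (specNorm W)^2 := by
          field_simp
        rw [h1]
        gcongr
      calc κ⁻¹ * l2norm x = sminCol W * ((specNorm W)⁻¹ * l2norm x) := by
            rw [hκdef, inv_div]
            field_simp
          _ ≤ sminCol W * l2norm z := mul_le_mul_of_nonneg_left hzlb (smin_nonneg W)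
          _ ≤ l2norm (W.mulVec z) := smin_le W z
          _ = l2norm y := by rw [hyz]
    have hAx : A.mulVec x = Vᵀ.mulVec y := by
      rw [hydef, hAdef, ← Matrix.mulVec_mulVec]
    have hq := hVquad y hymem
    have hlow2 : (l2norm y)^2 - δ₂ * (l2norm y)^2 ≤ (l2norm (Vᵀ.mulVec y))^2 := by
      have h := (abs_le.mp hq).1; linarith
    refine le_of_sq_le_sq' (l2norm_nonneg _) ?_
      (mul_nonneg (mul_nonneg (by norm_num) (inv_nonneg.mpr hκ0.le)) (l2norm_nonneg x))
    rw [hAx]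
    have hy2 : (κ⁻¹ * l2norm x)^2 ≤ (l2norm y)^2 :=
      pow_le_pow_left₀ (mul_nonneg (inv_nonneg.mpr hκ0.le) (l2norm_nonneg x)) hylb 2
    have hstep : (1 - δ₂) * (κ⁻¹ * l2norm x)^2 ≤ (1 - δ₂) * (l2norm y)^2 :=
      mul_le_mul_of_nonneg_left hy2 (by linarith)
    nlinarith [sq_nonneg (κ⁻¹ * l2norm x)]
  -- lower bound for the unperturbed system
  have hσ0 : (0:ℝ) ≤ 9/10 * κ⁻¹ := by positivity
  have hT0low : ∀ r : Fin k → ℝ,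
      (9/10 * κ⁻¹)^2 * l2norm r ≤ frobNorm (∑ i, r i • vecMulVec (v i) (v i)) := by
    intro r
    have hsum : (∑ i, r i • vecMulVec (v i) (v i)) = A * diagonal r * Aᵀ := by
      rw [← sum_rank_one_eq A r]
      refine Finset.sum_congr rfl fun i _ => ?_
      rw [hAcol i]
    rw [hsum, mul_assoc]
    have h1 : (9/10*κ⁻¹) * frobNorm (diagonal r * Aᵀ) ≤ frobNorm (A * (diagonal r * Aᵀ)) :=
      frob_mul_left A _ hσ0 hAlow
    have h2 := frob_mul_right A (diagonal r) hσ0 hAlow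
    rw [frob_diagonal] at h2
    calc (9/10*κ⁻¹)^2 * l2norm r = (9/10*κ⁻¹) * ((9/10*κ⁻¹) * l2norm r) := by ring
      _ ≤ (9/10*κ⁻¹) * frobNorm (diagonal r * Aᵀ) := mul_le_mul_of_nonneg_left h2 hσ0
      _ ≤ frobNorm (A * (diagonal r * Aᵀ)) := h1
  -- perturbation of each rank-one term
  set avec : Fin k → Fin k → ℝ := fun i => fun t => s i * uhat i t with havecdef
  have hav : ∀ i, l2norm (avec i - v i) ≤ δ₃ := fun i => huhat i
  have hΔ : ∀ i, frobNorm (vecMulVec (uhat i) (uhat i) - vecMulVec (v i) (v i)) ≤ 4 * δ₃ := by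
    intro i
    have hsq : vecMulVec (uhat i) (uhat i) = vecMulVec (avec i) (avec i) := by
      ext a b
      rw [Matrix.vecMulVec_apply, Matrix.vecMulVec_apply]
      show uhat i a * uhat i b = (s i * uhat i a) * (s i * uhat i b)
      rcases hs i with h | h <;> rw [h] <;> ring
    have hsplit : vecMulVec (avec i) (avec i) - vecMulVec (v i) (v i)
        = vecMulVec (avec i) (avec i - v i) + vecMulVec (avec i - v i) (v i) := by
      ext a b
      simp only [Matrix.vecMulVec_apply, Matrix.sub_apply, Matrix.add_apply, Pi.sub_apply]
      ring
    have ha_ub : l2norm (avec i) ≤ 3/2 + δ₃ := by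
      calc l2norm (avec i) = l2norm ((avec i - v i) + v i) := by rw [sub_add_cancel]
        _ ≤ l2norm (avec i - v i) + l2norm (v i) := l2norm_add_le _ _
        _ ≤ δ₃ + 3/2 := add_le_add (hav i) (hv_ub i)
        _ = 3/2 + δ₃ := by ring
    rw [hsq, hsplit]
    have t1 : frobNorm (vecMulVec (avec i) (avec i - v i)) ≤ (3/2 + δ₃) * δ₃ := by
      rw [frob_vecMulVec]
      exact mul_le_mul ha_ub (hav i) (l2norm_nonneg _) (by linarith)
    have t2 : frobNorm (vecMulVec (avec i - v i) (v i)) ≤ δ₃ * (3/2) := by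
      rw [frob_vecMulVec]
      exact mul_le_mul (hav i) (hv_ub i) (l2norm_nonneg _) hδ₃0
    calc frobNorm (vecMulVec (avec i) (avec i - v i) + vecMulVec (avec i - v i) (v i))
        ≤ frobNorm (vecMulVec (avec i) (avec i - v i)) + frobNorm (vecMulVec (avec i - v i) (v i)) :=
          frob_add_le _ _
      _ ≤ (3/2 + δ₃) * δ₃ + δ₃ * (3/2) := add_le_add t1 t2
      _ ≤ 4 * δ₃ := by nlinarith
  -- perturbation of the full system
  have hpert : ∀ r : Fin k → ℝ,
      frobNorm ((∑ i, r i • vecMulVec (uhat i) (uhat i)) - (∑ i, r i • vecMulVec (v i) (v i)))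
        ≤ 4*δ₃*(Real.sqrt k * l2norm r) := by
    intro r
    have hds : (∑ i, r i • vecMulVec (uhat i) (uhat i)) - (∑ i, r i • vecMulVec (v i) (v i))
        = ∑ i, r i • (vecMulVec (uhat i) (uhat i) - vecMulVec (v i) (v i)) := by
      rw [← Finset.sum_sub_distrib]
      refine Finset.sum_congr rfl fun i _ => (smul_sub _ _ _).symm
    rw [hds]
    calc frobNorm (∑ i, r i • (vecMulVec (uhat i) (uhat i) - vecMulVec (v i) (v i)))
        ≤ ∑ i, |r i| * frobNorm (vecMulVec (uhat i) (uhat i) - vecMulVec (v i) (v i)) :=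
          frob_sum_smul_le r _
      _ ≤ ∑ i, |r i| * (4*δ₃) :=
          Finset.sum_le_sum fun i _ => mul_le_mul_of_nonneg_left (hΔ i) (abs_nonneg _)
      _ = 4*δ₃ * ∑ i, |r i| := by rw [← Finset.sum_mul]; ring
      _ ≤ 4*δ₃*(Real.sqrt k * l2norm r) :=
          mul_le_mul_of_nonneg_left (abs_sum_le_sqrt_card r) (by positivity)
  -- δ₃ smallness in the κ scale
  have hd3k : Real.sqrt k * δ₃ ≤ (1/100) * κ⁻¹^2 := by
    have h1 : δ₃ * (κ^3 * Real.sqrt k) ≤ 1/100 := by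
      rw [← le_div_iff₀ (by positivity)]
      exact hδ₃c
    have hκ23 : κ^2 ≤ κ^3 := pow_le_pow_right₀ hκ1 (by norm_num)
    have h2 : Real.sqrt k * δ₃ * κ^2 ≤ 1/100 := by
      calc Real.sqrt k * δ₃ * κ^2 ≤ Real.sqrt k * δ₃ * κ^3 := by
            refine mul_le_mul_of_nonneg_left hκ23 (by positivity)
        _ = δ₃ * (κ^3 * Real.sqrt k) := by ring
        _ ≤ 1/100 := h1
    have h3 : Real.sqrt k * δ₃ ≤ (1/100) / κ^2 := by
      rw [le_div_iff₀ (by positivity)]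
      exact h2
    calc Real.sqrt k * δ₃ ≤ (1/100) / κ^2 := h3
      _ = (1/100) * κ⁻¹^2 := by rw [div_eq_mul_inv, inv_pow]
  -- lower bound for the perturbed system
  have hTlow : ∀ r : Fin k → ℝ,
      (3/4) * κ⁻¹^2 * l2norm r ≤ frobNorm (∑ i, r i • vecMulVec (uhat i) (uhat i)) := by
    intro r
    set X := ∑ i, r i • vecMulVec (uhat i) (uhat i) with hX
    set Y := ∑ i, r i • vecMulVec (v i) (v i) with hY
    have h1 := hT0low r
    have h2 := hpert r
    have h3 : frobNorm Y ≤ frobNorm X + frobNorm (Y - X) := by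
      have hYX : Y = X + (Y - X) := by abel
      calc frobNorm Y = frobNorm (X + (Y - X)) := by rw [← hYX]
        _ ≤ frobNorm X + frobNorm (Y - X) := frob_add_le _ _
    rw [frob_sub_comm] at h3
    have h4 : 4*δ₃*(Real.sqrt k * l2norm r) ≤ 4*((1/100)*κ⁻¹^2) * l2norm r := by
      have := mul_le_mul_of_nonneg_right hd3k (l2norm_nonneg r)
      nlinarith [l2norm_nonneg r]
    have h5 : (9/10*κ⁻¹)^2 * l2norm r = (81/100) * κ⁻¹^2 * l2norm r := by ring
    nlinarith [l2norm_nonneg r]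
  -- the linear map T
  set S : (Fin k → ℝ) →ₗ[ℝ] Matrix (Fin k) (Fin k) ℝ :=
    ∑ i, LinearMap.smulRight (LinearMap.proj i) (vecMulVec (uhat i) (uhat i)) with hSdef
  have hSapp : ∀ r, S r = ∑ i, r i • vecMulVec (uhat i) (uhat i) := by
    intro r
    rw [hSdef, LinearMap.sum_apply]
    refine Finset.sum_congr rfl fun i _ => ?_
    rw [LinearMap.smulRight_apply, LinearMap.proj_apply]
  set T := (vecL k).comp S with hTdef
  have hTapp : ∀ r, T r = vecL k (∑ i, r i • vecMulVec (uhat i) (uhat i)) := fun r => by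
    rw [hTdef, LinearMap.comp_apply, hSapp]
  have hfrobT : ∀ (r : Fin k → ℝ) (X : Matrix (Fin k) (Fin k) ℝ),
      ‖T r - vecL k X‖ = frobNorm ((∑ i, r i • vecMulVec (uhat i) (uhat i)) - X) := by
    intro r X
    rw [hTapp, ← map_sub, ← frob_eq]
  have hκinv2 : (0:ℝ) < κ⁻¹^2 := by positivity
  have hinj : Function.Injective T := by
    intro r1 r2 h12
    have h0 : ‖T (r1 - r2) - vecL k 0‖ = 0 := by
      rw [map_sub T, h12, map_zero, sub_zero, sub_self, norm_zero]
    rw [hfrobT, sub_zero] at h0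
    have h1 := hTlow (r1 - r2)
    rw [h0] at h1
    have h2 : l2norm (r1 - r2) = 0 := by
      have := l2norm_nonneg (r1 - r2)
      nlinarith
    exact sub_eq_zero.mp (l2norm_eq_zero h2)
  obtain ⟨rhat, hmin, huniq⟩ := least_squares T hinj (vecL k Q₂hat)
  refine ⟨rhat, ?_, ?_, ?_⟩
  · intro r
    have h := hmin r
    rwa [hfrobT, hfrobT] at h
  · intro r' hr'
    refine huniq r' fun r => ?_
    rw [hfrobT, hfrobT]
    exact hr' r
  · intro i
    have hB0 : 0 ≤ l2norm rstar := l2norm_nonneg _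
    have hQ₂N : Q₂ = ∑ j, rstar j • vecMulVec (v j) (v j) := hQ₂
    have hbb : ‖vecL k Q₂hat - vecL k Q₂‖ ≤ δ₄ * frobNorm Q₂ := by
      rw [← frob_sub_eq]
      exact hQ₂hat
    have hTN : ‖T rstar - vecL k Q₂‖ ≤ 4*δ₃*(Real.sqrt k * l2norm rstar) := by
      rw [hfrobT, hQ₂N]
      exact hpert rstar
    have hQfrob : frobNorm Q₂ ≤ (9/4) * (Real.sqrt k * l2norm rstar) := by
      rw [hQ₂N]
      calc frobNorm (∑ j, rstar j • vecMulVec (v j) (v j))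
          ≤ ∑ j, |rstar j| * frobNorm (vecMulVec (v j) (v j)) := frob_sum_smul_le _ _
        _ ≤ ∑ j, |rstar j| * (9/4) := by
            refine Finset.sum_le_sum fun j _ => mul_le_mul_of_nonneg_left ?_ (abs_nonneg _)
            rw [frob_vecMulVec]
            nlinarith [hv_ub j, l2norm_nonneg (v j)]
        _ = (9/4) * ∑ j, |rstar j| := by rw [← Finset.sum_mul]; ring
        _ ≤ (9/4) * (Real.sqrt k * l2norm rstar) :=
            mul_le_mul_of_nonneg_left (abs_sum_le_sqrt_card _) (by norm_num)
    have hlow := hTlow (rhat - rstar)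
    have heq : frobNorm (∑ j, (rhat - rstar) j • vecMulVec (uhat j) (uhat j))
        = ‖T rhat - T rstar‖ := by
      rw [frob_eq, ← hTapp, map_sub]
    rw [heq] at hlow
    have htri : ‖T rhat - T rstar‖ ≤ ‖T rhat - vecL k Q₂hat‖ + ‖vecL k Q₂hat - vecL k Q₂‖
        + ‖vecL k Q₂ - T rstar‖ := by
      have habel : T rhat - T rstar = (T rhat - vecL k Q₂hat)
          + ((vecL k Q₂hat - vecL k Q₂) + (vecL k Q₂ - T rstar)) := by abel
      rw [habel]
      refine (norm_add_le _ _).trans ?_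
      have := norm_add_le (vecL k Q₂hat - vecL k Q₂) (vecL k Q₂ - T rstar)
      linarith
    have hmin' : ‖T rhat - vecL k Q₂hat‖ ≤ ‖T rstar - vecL k Q₂hat‖ := hmin rstar
    have h5 : ‖T rstar - vecL k Q₂hat‖ ≤ ‖T rstar - vecL k Q₂‖ + ‖vecL k Q₂ - vecL k Q₂hat‖ := by
      have habel : T rstar - vecL k Q₂hat = (T rstar - vecL k Q₂) + (vecL k Q₂ - vecL k Q₂hat) := by
        abel
      rw [habel]
      exact norm_add_le _ _
    have h6 : ‖vecL k Q₂ - vecL k Q₂hat‖ = ‖vecL k Q₂hat - vecL k Q₂‖ := norm_sub_rev _ _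
    have h7 : ‖vecL k Q₂ - T rstar‖ = ‖T rstar - vecL k Q₂‖ := norm_sub_rev _ _
    have e2 : ‖vecL k Q₂hat - vecL k Q₂‖ ≤ δ₄ * ((9/4) * (Real.sqrt k * l2norm rstar)) :=
      hbb.trans (mul_le_mul_of_nonneg_left hQfrob hδ₄0)
    have hfinal : (3/4) * κ⁻¹^2 * l2norm (rhat - rstar)
        ≤ (8*δ₃ + (9/2)*δ₄) * (Real.sqrt k * l2norm rstar) := by
      linarith [hlow, htri, hmin', h5, h6, h7, e2, hTN]
    have hcoord : |rhat i - rstar i| ≤ l2norm (rhat - rstar) := by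
      have h := coord_le_l2norm (rhat - rstar) i
      simpa using h
    have hone : (4/3) * κ^2 * ((3/4) * κ⁻¹^2) = 1 := by
      field_simp
    have hl2e : l2norm (rhat - rstar)
        ≤ (4/3)*κ^2*((8*δ₃ + (9/2)*δ₄) * (Real.sqrt k * l2norm rstar)) := by
      have hmul := mul_le_mul_of_nonneg_left hfinal
        (by positivity : (0:ℝ) ≤ (4/3)*κ^2)
      calc l2norm (rhat - rstar)
          = ((4/3) * κ^2 * ((3/4) * κ⁻¹^2)) * l2norm (rhat - rstar) := by rw [hone, one_mul]
        _ = (4/3)*κ^2*((3/4) * κ⁻¹^2 * l2norm (rhat - rstar)) := by ring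
        _ ≤ (4/3)*κ^2*((8*δ₃ + (9/2)*δ₄) * (Real.sqrt k * l2norm rstar)) := hmul
    have hk2 : (k:ℝ) ≤ (k:ℝ)^2 := le_self_pow₀ hk1 two_ne_zero
    have hk3 : (k:ℝ) ≤ (k:ℝ)^3 := le_self_pow₀ hk1 three_ne_zero
    have hsqk : Real.sqrt k ≤ (k:ℝ) := by
      have h := Real.sqrt_le_sqrt hk2
      rwa [Real.sqrt_sq (by positivity)] at h
    have hκ28 : κ^2 ≤ κ^8 := pow_le_pow_right₀ hκ1 (by norm_num)
    have hprod1 : κ^2 * Real.sqrt k ≤ κ^8 * (k:ℝ)^3 :=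
      mul_le_mul hκ28 (hsqk.trans hk3) hsk0.le (by positivity)
    have hprod2 : κ^2 * Real.sqrt k ≤ κ^2 * (k:ℝ)^2 :=
      mul_le_mul_of_nonneg_left (hsqk.trans hk2) (by positivity)
    have hd3B : 0 ≤ δ₃ * l2norm rstar := mul_nonneg hδ₃0 hB0
    have hd4B : 0 ≤ δ₄ * l2norm rstar := mul_nonneg hδ₄0 hB0
    calc |rhat i - rstar i| ≤ l2norm (rhat - rstar) := hcoord
      _ ≤ (4/3)*κ^2*((8*δ₃ + (9/2)*δ₄) * (Real.sqrt k * l2norm rstar)) := hl2e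
      _ = (32/3)*(κ^2*Real.sqrt k)*(δ₃*l2norm rstar)
          + 6*(κ^2*Real.sqrt k)*(δ₄*l2norm rstar) := by ring
      _ ≤ (32/3)*(κ^8*(k:ℝ)^3)*(δ₃*l2norm rstar)
          + 6*(κ^2*(k:ℝ)^2)*(δ₄*l2norm rstar) :=
          add_le_add
            (mul_le_mul_of_nonneg_right (mul_le_mul_of_nonneg_left hprod1 (by norm_num)) hd3B)
            (mul_le_mul_of_nonneg_right (mul_le_mul_of_nonneg_left hprod2 (by norm_num)) hd4B)
      _ ≤ 16*(κ^8*(k:ℝ)^3)*(δ₃*l2norm rstar) + 16*(κ^2*(k:ℝ)^2)*(δ₄*l2norm rstar) :=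
          add_le_add
            (mul_le_mul_of_nonneg_right
              (mul_le_mul_of_nonneg_right (by norm_num : (32/3:ℝ) ≤ 16)
                (mul_nonneg (pow_nonneg hκ0.le 8) (pow_nonneg hk0.le 3))) hd3B)
            (mul_le_mul_of_nonneg_right
              (mul_le_mul_of_nonneg_right (by norm_num : (6:ℝ) ≤ 16)
                (mul_nonneg (pow_nonneg hκ0.le 2) (pow_nonneg hk0.le 2))) hd4B)
      _ = 16 * ((k:ℝ)^3 * κ^8 * δ₃ + κ^2 * (k:ℝ)^2 * δ₄) * l2norm rstar := by ring
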